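/- Let T, Ĉ be real numbers with T > 1, 0 < Ĉ < 1 and TĈ < 1, and C₁₇ > 0. For real parameters T and Ĉ, define L₉(θ) = TĈ − Ĉ + (1 − TĈ)·cos²θ and R₂(θ) = cos θ + √(L₉(θ)). Let Y₂ : (0, π/2) → (0,∞) be differentiable and set f(θ) = C₁₇·sin θ·Y₂(θ)/R₂(θ). Then f satisfies f'(θ) = Ĉ·f(θ)/(sin θ·R₂(θ)) for all θ ∈ (0, π/2) if and only if Y₂ satisfies (log Y₂)'(θ) = −(1 − Ĉ)/(√(L₉(θ))·sin θ) for all θ ∈ (0, π/2). -/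

import Mathlib

open Real Set

/-- Derivation of (5.22) from (5.17): with `f = C₁₇·sin θ·Y₂/R₂`, the ODE
`f' = Ĉ·f/(sin θ·R₂)` holds on `(0, π/2)` iff
`(log Y₂)' = −(1 − Ĉ)/(√L₉·sin θ)`. -/
theorem stmt_10
    (T C C₁₇ : ℝ) (hT : 1 < T) (hC0 : 0 < C) (hC1 : C < 1) (hTC : T * C < 1)
    (hC₁₇ : 0 < C₁₇)
    (L₉ R₂ : ℝ → ℝ)
    (hL₉ : ∀ θ : ℝ, L₉ θ = T * C - C + (1 - T * C) * (Real.cos θ) ^ 2)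
    (hR₂ : ∀ θ : ℝ, R₂ θ = Real.cos θ + Real.sqrt (L₉ θ))
    (Y₂ : ℝ → ℝ)
    (hY₂pos : ∀ θ ∈ Ioo (0:ℝ) (π / 2), 0 < Y₂ θ)
    (hY₂diff : ∀ θ ∈ Ioo (0:ℝ) (π / 2), DifferentiableAt ℝ Y₂ θ)
    (f : ℝ → ℝ)
    (hf : ∀ θ : ℝ, f θ = C₁₇ * Real.sin θ * Y₂ θ / R₂ θ) :
    (∀ θ ∈ Ioo (0:ℝ) (π / 2),
        deriv f θ = C * f θ / (Real.sin θ * R₂ θ))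
      ↔
    (∀ θ ∈ Ioo (0:ℝ) (π / 2),
        deriv (fun x => Real.log (Y₂ x)) θ
          = -(1 - C) / (Real.sqrt (L₉ θ) * Real.sin θ)) := by
  have key : ∀ θ ∈ Ioo (0:ℝ) (π / 2),
      (deriv f θ = C * f θ / (Real.sin θ * R₂ θ)) ↔
      (deriv (fun x => Real.log (Y₂ x)) θ
          = -(1 - C) / (Real.sqrt (L₉ θ) * Real.sin θ)) := by
    intro θ hθ
    obtain ⟨hθ0, hθ2⟩ := hθ
    have hs : 0 < Real.sin θ := Real.sin_pos_of_pos_of_lt_pi hθ0 (by linarith [Real.pi_pos])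
    have hc : 0 < Real.cos θ := Real.cos_pos_of_mem_Ioo ⟨by linarith [Real.pi_pos], hθ2⟩
    have hL : 0 < L₉ θ := by
      rw [hL₉]; nlinarith [sq_nonneg (Real.cos θ)]
    have hq : 0 < Real.sqrt (L₉ θ) := Real.sqrt_pos.2 hL
    have hqsq : Real.sqrt (L₉ θ) ^ 2 = T * C - C + (1 - T * C) * (Real.cos θ) ^ 2 := by
      rw [Real.sq_sqrt hL.le, hL₉]
    have hRpos : 0 < R₂ θ := by
      rw [hR₂]; linarith [Real.sqrt_nonneg (L₉ θ)]
    have hy : 0 < Y₂ θ := hY₂pos θ ⟨hθ0, hθ2⟩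
    have hY2d : HasDerivAt Y₂ (deriv Y₂ θ) θ := (hY₂diff θ ⟨hθ0, hθ2⟩).hasDerivAt
    have hLfun : L₉ = fun x => T * C - C + (1 - T * C) * Real.cos x ^ 2 := funext hL₉
    have hRfun : R₂ = fun x => Real.cos x + Real.sqrt (L₉ x) := funext hR₂
    have hffun : f = fun x => C₁₇ * Real.sin x * Y₂ x / R₂ x := funext hf
    have hLd : HasDerivAt L₉ ((1 - T * C) * (2 * Real.cos θ * (-Real.sin θ))) θ := by
      rw [hLfun]
      have h1 : HasDerivAt (fun x => T * C - C + (1 - T * C) * Real.cos x ^ 2)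
          ((1 - T * C) * (((2:ℕ):ℝ) * Real.cos θ ^ (2 - 1) * -Real.sin θ)) θ := (((Real.hasDerivAt_cos θ).fun_pow 2).const_mul (1 - T * C)).const_add (T * C - C)
      convert h1 using 1
      ring
    have hsqd : HasDerivAt (fun x => Real.sqrt (L₉ x))
        ((1 - T * C) * (2 * Real.cos θ * (-Real.sin θ)) / (2 * Real.sqrt (L₉ θ))) θ :=
      hLd.sqrt hL.ne'
    have hRd : HasDerivAt R₂
        (-Real.sin θ + (1 - T * C) * (2 * Real.cos θ * (-Real.sin θ)) / (2 * Real.sqrt (L₉ θ))) θ := by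
      rw [hRfun]
      exact (Real.hasDerivAt_cos θ).add hsqd
    have hnum : HasDerivAt (fun x => C₁₇ * Real.sin x * Y₂ x)
        (C₁₇ * Real.cos θ * Y₂ θ + C₁₇ * Real.sin θ * deriv Y₂ θ) θ := by
      have h1 : HasDerivAt (fun x => C₁₇ * Real.sin x) (C₁₇ * Real.cos θ) θ :=
        (Real.hasDerivAt_sin θ).const_mul C₁₇
      exact h1.mul hY2d
    have hfd : HasDerivAt f
        (((C₁₇ * Real.cos θ * Y₂ θ + C₁₇ * Real.sin θ * deriv Y₂ θ) * R₂ θ -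
          C₁₇ * Real.sin θ * Y₂ θ *
            (-Real.sin θ + (1 - T * C) * (2 * Real.cos θ * (-Real.sin θ)) / (2 * Real.sqrt (L₉ θ)))) /
          (R₂ θ) ^ 2) θ := by
      rw [hffun]
      exact hnum.div hRd hRpos.ne'
    have hlogd : HasDerivAt (fun x => Real.log (Y₂ x)) (deriv Y₂ θ / Y₂ θ) θ :=
      hY2d.log hy.ne'
    rw [hfd.deriv, hlogd.deriv, hf θ, hR₂ θ]
    set s := Real.sin θ
    set c := Real.cos θ
    set q := Real.sqrt (L₉ θ)
    set y := Y₂ θ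
    set d := deriv Y₂ θ
    have hpyth : s ^ 2 = 1 - c ^ 2 := by
      have := Real.sin_sq_add_cos_sq θ; simp only [s, c] at *; linarith
    have hRq : c + q ≠ 0 := by positivity
    have hqs : q * s ≠ 0 := by positivity
    constructor
    · intro h
      field_simp at h ⊢
      have hne : (2 * C₁₇ * s * (c + q) ^ 2 : ℝ) ≠ 0 := by positivity
      have h2 : (c * y + s * d) * (c + q) * q + s * y * (s * q + (1 - T * C) * c * s)
          = C * y * q := by
        apply mul_left_cancel₀ hne
        linear_combination (2 * C₁₇ * s * (c + q) ^ 2) * h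
      have h3 : s * d * q * (c + q) = (C - 1) * y * (c + q) := by
        linear_combination h2 - c * y * hqsq - (y * q + (1 - T * C) * c * y) * hpyth
      have hd : s * d * q = (C - 1) * y := mul_right_cancel₀ hRq h3
      linear_combination hd
    · intro h
      rw [div_eq_div_iff hy.ne' hqs] at h
      field_simp
      linear_combination ((c + q)) * h
        + (c * y) * hqsq
        + ((y * q + (1 - T * C) * c * y)) * hpyth
  constructor
  · intro h θ hθ; exact (key θ hθ).1 (h θ hθ)
  · intro h θ hθ; exact (key θ hθ).2 (h θ hθ)
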